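/- Let n be a nonnegative integer and a₁,a₂,a₃,b₁,b₂,b₃ parameters (with b-parameters not nonpositive integers) such that the series ₄F₃(−n, A, B, C; E, F, G; 1) is balanced, i.e., −n + A + B + C + 1 = E + F + G. Then ₄F₃(−n, A, B, C; E, F, G; 1) = [(F−C)_n (G−C)_n / ((F)_n (G)_n)] · ₄F₃(−n, E−A, E−B, C; E, E+F−A−B, E+G−A−B; 1). -/

import Mathlib

/-- The rising factorial (Pochhammer symbol) over ℝ. -/
noncomputable def rising (a : ℝ) (n : ℕ) : ℝ := (ascPochhammer ℝ n).eval a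

open Finset

lemma rising_zero (x : ℝ) : rising x 0 = 1 := by simp [rising]

lemma rising_one (x : ℝ) : rising x 1 = x := by simp [rising]

lemma rising_succ (x : ℝ) (k : ℕ) : rising x (k+1) = rising x k * (x + k) := by
  simp [rising, ascPochhammer_succ_eval]

lemma rising_eq_prod (x : ℝ) (n : ℕ) : rising x n = ∏ i ∈ range n, (x + i) := by
  induction n with
  | zero => simp [rising_zero]
  | succ n ih => rw [rising_succ, ih, prod_range_succ]

lemma rising_add (x : ℝ) (k m : ℕ) : rising x (k+m) = rising x k * rising (x+k) m := by
  induction m with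
  | zero => simp [rising_zero]
  | succ m ih => rw [← add_assoc, rising_succ, ih, rising_succ]; push_cast; ring

lemma rising_ne_zero {x : ℝ} (h : ∀ m : ℕ, x ≠ -(m:ℝ)) (n : ℕ) : rising x n ≠ 0 := by
  rw [rising_eq_prod]
  exact prod_ne_zero_iff.2 fun i _ => by
    have := h i
    intro hc
    exact this (by linarith)

lemma rising_shift_ne_zero {x : ℝ} (h : ∀ m : ℕ, x ≠ -(m:ℝ)) (k n : ℕ) :
    rising (x + k) n ≠ 0 := by
  rw [rising_eq_prod]
  exact prod_ne_zero_iff.2 fun i _ => by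
    have := h (k + i)
    intro hc
    apply this
    push_cast
    linarith

lemma rising_reflect (x : ℝ) (m : ℕ) : rising x m = (-1)^m * rising (1 - x - m) m := by
  rw [rising_eq_prod, rising_eq_prod, ← prod_range_reflect (fun i => (1 - x - (m:ℝ) + i))]
  have hm1 : ((-1:ℝ))^m = ∏ _i ∈ range m, (-1:ℝ) := by rw [prod_const, card_range]
  rw [hm1, ← prod_mul_distrib]
  apply prod_congr rfl
  intro i hi
  have hi' : i < m := mem_range.1 hi
  have : ((m - 1 - i : ℕ) : ℝ) = (m : ℝ) - 1 - i := by
    have : m - 1 - i = m - (1 + i) := by omega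
    rw [this]
    push_cast [Nat.cast_sub (by omega : 1 + i ≤ m)]
    ring
  rw [this]
  ring

lemma neg_one_pow_sub {j k : ℕ} (h : k ≤ j) : ((-1:ℝ))^(j-k) = (-1)^j * (-1)^k := by
  have h2 : j - k + 2 * k = j + k := by omega
  have : ((-1:ℝ))^(j-k) = (-1)^(j-k) * ((-1:ℝ)^2)^k := by norm_num
  rw [this, ← pow_mul, ← pow_add, h2, pow_add]

lemma rising_neg_nat {N m : ℕ} (h : m ≤ N) :
    rising (-(N:ℝ)) m = (-1)^m * (N.choose m) * m.factorial := by
  induction m with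
  | zero => simp [rising_zero]
  | succ m ih =>
    have hm : m ≤ N := by omega
    rw [rising_succ, ih hm]
    have hc : (N.choose m : ℝ) * ((N:ℝ) - m) = (N.choose (m+1)) * (m+1) := by
      have := Nat.add_one_mul_choose_eq N m
      have h3 : N.choose m * (N - m) = N.choose (m+1) * (m+1) := by
        have := Nat.choose_succ_right_eq N m
        omega
      calc (N.choose m : ℝ) * ((N:ℝ) - m) = ((N.choose m * (N - m) : ℕ) : ℝ) := by
            push_cast [Nat.cast_sub hm]
            ring
        _ = _ := by rw [h3]; push_cast; ring
    have : -(N:ℝ) + m = -((N:ℝ) - m) := by ring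
    rw [this]
    rw [Nat.factorial_succ]
    have h4 : (-1:ℝ)^m * (N.choose m) * m.factorial * -((N:ℝ) - m)
        = (-1)^(m+1) * ((N.choose m : ℝ) * ((N:ℝ) - m)) * m.factorial := by ring
    rw [h4, hc]
    push_cast
    ring

lemma rising_conv (x y : ℝ) (M : ℕ) :
    rising (x+y) M = ∑ k ∈ range (M+1), (M.choose k : ℝ) * rising x k * rising y (M-k) := by
  induction M with
  | zero => simp [rising_zero]
  | succ M ih =>
    rw [rising_succ, ih]
    symm
    have e2 : ∀ k ∈ range (M+1),
        ((M+1).choose (k+1) : ℝ) * rising x (k+1) * rising y (M+1-(k+1))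
          = (M.choose k : ℝ) * rising x (k+1) * rising y (M-k)
            + (M.choose (k+1) : ℝ) * rising x (k+1) * rising y (M-k) := by
      intro k hk
      rw [Nat.choose_succ_succ M k, (by omega : M+1-(k+1) = M-k)]
      push_cast
      ring
    have key1 : ∑ k ∈ range (M+2), (M.choose k : ℝ) * rising x k * rising y (M+1-k)
        = ∑ k ∈ range (M+1), (M.choose (k+1) : ℝ) * rising x (k+1) * rising y (M-k)
          + rising y (M+1) := by
      rw [sum_range_succ']
      congr 1
      · apply sum_congr rfl
        intro k hk
        rw [(by omega : M+1-(k+1) = M-k)]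
      · simp [rising_zero]
    have key2 : ∑ k ∈ range (M+2), (M.choose k : ℝ) * rising x k * rising y (M+1-k)
        = ∑ k ∈ range (M+1), (M.choose k : ℝ) * rising x k * rising y (M+1-k) := by
      rw [sum_range_succ]
      simp
    calc ∑ k ∈ range (M+1+1), ((M+1).choose k : ℝ) * rising x k * rising y (M+1-k)
        = ∑ k ∈ range (M+1), ((M+1).choose (k+1) : ℝ) * rising x (k+1) * rising y (M+1-(k+1))
            + ((M+1).choose 0 : ℝ) * rising x 0 * rising y (M+1-0) := sum_range_succ' _ _
      _ = ∑ k ∈ range (M+1), ((M.choose k : ℝ) * rising x (k+1) * rising y (M-k)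
            + (M.choose (k+1) : ℝ) * rising x (k+1) * rising y (M-k)) + rising y (M+1) := by
          rw [sum_congr rfl e2]
          simp [rising_zero]
      _ = ∑ k ∈ range (M+1), (M.choose k : ℝ) * rising x (k+1) * rising y (M-k)
            + (∑ k ∈ range (M+1), (M.choose (k+1) : ℝ) * rising x (k+1) * rising y (M-k)
              + rising y (M+1)) := by
          rw [sum_add_distrib]
          ring
      _ = ∑ k ∈ range (M+1), (M.choose k : ℝ) * rising x (k+1) * rising y (M-k)
            + ∑ k ∈ range (M+1), (M.choose k : ℝ) * rising x k * rising y (M+1-k) := by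
          rw [← key1, key2]
      _ = ∑ k ∈ range (M+1), ((M.choose k : ℝ) * rising x k * rising y (M-k)) * (x+y+M) := by
          rw [← sum_add_distrib]
          apply sum_congr rfl
          intro k hk
          have hk' : k ≤ M := by have := mem_range.1 hk; omega
          rw [(by omega : M+1-k = (M-k)+1), rising_succ, rising_succ]
          rw [(by push_cast [Nat.cast_sub hk']; ring : ((M-k:ℕ):ℝ) = (M:ℝ) - k)]
          ring
      _ = (∑ k ∈ range (M+1), (M.choose k : ℝ) * rising x k * rising y (M-k)) * (x+y+M) := by
          rw [sum_mul]

lemma rising_vand (x y : ℝ) (M : ℕ) :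
    ∑ k ∈ range (M+1), (-1:ℝ)^k * (M.choose k : ℝ) * rising x k * rising (y+k) (M-k)
      = rising (y-x) M := by
  have e1 : ∀ k ∈ range (M+1),
      (-1:ℝ)^k * (M.choose k : ℝ) * rising x k * rising (y+k) (M-k)
        = (-1:ℝ)^M * ((M.choose k : ℝ) * rising x k * rising (1-y-M) (M-k)) := by
    intro k hk
    have hk' : k ≤ M := by have := mem_range.1 hk; omega
    have hr : rising (y+k) (M-k) = (-1:ℝ)^(M-k) * rising (1-y-M) (M-k) := by
      rw [rising_reflect (y+k) (M-k)]
      congr 2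
      push_cast [Nat.cast_sub hk']
      ring
    rw [hr, neg_one_pow_sub hk']
    have : ((-1:ℝ)^k * (-1:ℝ)^k) = 1 := by
      rw [← mul_pow]
      norm_num
    linear_combination ((-1:ℝ)^M * (M.choose k : ℝ) * rising x k * rising (1-y-(M:ℝ)) (M-k)) * this
  rw [sum_congr rfl e1, ← mul_sum, ← rising_conv]
  rw [rising_reflect (y-x) M]
  congr 2
  ring

lemma tri_swap (n : ℕ) (f : ℕ → ℕ → ℝ) :
    ∑ j ∈ range (n+1), ∑ k ∈ range (j+1), f j k
      = ∑ k ∈ range (n+1), ∑ m ∈ range (n+1-k), f (k+m) k := by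
  induction n with
  | zero => simp
  | succ n ih =>
    rw [sum_range_succ, ih]
    have : ∑ k ∈ range (n+2), ∑ m ∈ range (n+2-k), f (k+m) k
        = ∑ k ∈ range (n+1), ∑ m ∈ range (n+2-k), f (k+m) k + f (n+1) (n+1) := by
      rw [sum_range_succ]
      simp
    rw [this]
    have e : ∀ k ∈ range (n+1), ∑ m ∈ range (n+2-k), f (k+m) k
        = ∑ m ∈ range (n+1-k), f (k+m) k + f (n+1) k := by
      intro k hk
      have hk' : k ≤ n := by have := mem_range.1 hk; omega
      rw [(by omega : n+2-k = (n+1-k)+1), sum_range_succ, (by omega : k+(n+1-k) = n+1)]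
    rw [sum_congr rfl e, sum_add_distrib, sum_range_succ (fun k => f (n+1) k)]
    ring

lemma saalschutz (N : ℕ) (a b c d : ℝ) (h : c + d = 1 + a + b - N) :
    ∑ k ∈ range (N+1), (-1:ℝ)^k * (N.choose k : ℝ) * rising a k * rising b k
        * rising (c+k) (N-k) * rising (d+k) (N-k)
      = (-1:ℝ)^N * rising (c-a) N * rising (c-b) N := by
  -- step 1: expand rising a k by Vandermonde
  have expand : ∀ k, rising a k
      = ∑ i ∈ range (k+1), (-1:ℝ)^i * (k.choose i : ℝ) * rising (c-a) i * rising (c+i) (k-i) := by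
    intro k
    rw [rising_vand (c-a) c k]
    congr 1
    ring
  have e1 : ∀ k ∈ range (N+1),
      (-1:ℝ)^k * (N.choose k : ℝ) * rising a k * rising b k
          * rising (c+k) (N-k) * rising (d+k) (N-k)
        = ∑ i ∈ range (k+1), (-1:ℝ)^k * (N.choose k : ℝ)
            * ((-1:ℝ)^i * (k.choose i : ℝ) * rising (c-a) i * rising (c+i) (k-i)) * rising b k
            * rising (c+k) (N-k) * rising (d+k) (N-k) := by
    intro k hk
    rw [expand k, mul_sum, sum_mul, sum_mul, sum_mul]
  rw [sum_congr rfl e1, tri_swap]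
  -- pointwise simplification of the inner (i,m) term
  have e2 : ∀ i ∈ range (N+1), ∀ m ∈ range (N+1-i),
      (-1:ℝ)^(i+m) * (N.choose (i+m) : ℝ)
          * ((-1:ℝ)^i * ((i+m).choose i : ℝ) * rising (c-a) i * rising (c+i) ((i+m)-i))
          * rising b (i+m) * rising (c+(i+m)) (N-(i+m)) * rising (d+(i+m)) (N-(i+m))
        = ((N.choose i : ℝ) * rising (c-a) i * rising b i * rising (c+i) (N-i))
          * ((-1:ℝ)^m * ((N-i).choose m : ℝ) * rising (b+i) m * rising ((d+i)+m) ((N-i)-m)) := by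
    intro i hi m hm
    have hiN : i ≤ N := by have := mem_range.1 hi; omega
    have hmN : m ≤ N - i := by have := mem_range.1 hm; omega
    have hch : (N.choose (i+m) : ℝ) * ((i+m).choose i : ℝ)
        = (N.choose i : ℝ) * ((N-i).choose m : ℝ) := by
      have := Nat.choose_mul (n := N) (by omega : i ≤ i + m)
      rw [(by omega : (i+m)-i = m)] at this
      exact_mod_cast this
    have hb : rising b (i+m) = rising b i * rising (b+i) m := rising_add b i m
    have hsplit : rising (c+i) (N-i) = rising (c+i) m * rising (c+(i+m)) (N-(i+m)) := by
      have := rising_add (c+i) m (N-i-m)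
      rw [(by omega : m + (N-i-m) = N-i)] at this
      rw [this, (by omega : N-(i+m) = N-i-m)]
      congr 2
      push_cast
      ring
    have hd : rising (d+(i+m)) (N-(i+m)) = rising ((d+i)+m) ((N-i)-m) := by
      rw [(by omega : N-(i+m) = (N-i)-m)]
      congr 1
      push_cast
      ring
    have hsgn : (-1:ℝ)^(i+m) * (-1:ℝ)^i = (-1:ℝ)^m * ((-1:ℝ)^i * (-1:ℝ)^i) := by
      rw [pow_add]
      ring
    have hsq : ((-1:ℝ)^i * (-1:ℝ)^i) = 1 := by
      rw [← mul_pow]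
      norm_num
    rw [(by omega : (i+m)-i = m), hb, hd]
    rw [hsplit]
    linear_combination ((N.choose (i+m) : ℝ) * ((i+m).choose i : ℝ) * rising (c-a) i
        * (rising b i * rising (b+i) m) * (rising (c+i) m * rising (c+(i+m)) (N-(i+m)))
        * rising ((d+i)+m) ((N-i)-m)) * (by rw [pow_add]; ring_nf; linear_combination (-1:ℝ)^m * hsq : ((-1:ℝ)^(i+m) * (-1:ℝ)^i : ℝ) = (-1:ℝ)^m)
      + ((-1:ℝ)^m * (rising (c-a) i * rising b i * rising (b+i) m
        * (rising (c+i) m * rising (c+(i+m)) (N-(i+m))) * rising ((d+i)+m) ((N-i)-m))) * hch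
  have e3 : ∀ i ∈ range (N+1),
      ∑ m ∈ range (N+1-i), ((N.choose i : ℝ) * rising (c-a) i * rising b i * rising (c+i) (N-i))
          * ((-1:ℝ)^m * ((N-i).choose m : ℝ) * rising (b+i) m * rising ((d+i)+m) ((N-i)-m))
        = (-1:ℝ)^N * rising (c-a) N
            * ((-1:ℝ)^i * (N.choose i : ℝ) * rising b i * rising (c+i) (N-i)) := by
    intro i hi
    have hiN : i ≤ N := by have := mem_range.1 hi; omega
    rw [(by omega : N+1-i = (N-i)+1), ← mul_sum, rising_vand (b+i) (d+i) (N-i)]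
    have harg : rising ((d+i)-(b+(i:ℝ))) (N-i) = rising (d-b) (N-i) := by
      congr 1
      ring
    rw [harg]
    have hrefl : rising ((c-a)+(i:ℝ)) (N-i) = (-1:ℝ)^(N-i) * rising (d-b) (N-i) := by
      rw [rising_reflect ((c-a)+(i:ℝ)) (N-i)]
      congr 2
      push_cast [Nat.cast_sub hiN]
      linarith
    have e5 : rising (d-b) (N-i) = (-1:ℝ)^(N-i) * rising ((c-a)+(i:ℝ)) (N-i) := by
      rw [hrefl, ← mul_assoc, ← mul_pow]
      norm_num
    rw [e5, neg_one_pow_sub hiN]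
    have hadd : rising (c-a) i * rising ((c-a)+(i:ℝ)) (N-i) = rising (c-a) N := by
      rw [← rising_add, (by omega : i + (N-i) = N)]
    linear_combination ((-1:ℝ)^N * (-1:ℝ)^i * (N.choose i : ℝ) * rising b i
      * rising (c+(i:ℝ)) (N-i)) * hadd
  push_cast
  rw [sum_congr rfl (fun i hi => sum_congr rfl (e2 i hi)), sum_congr rfl e3, ← mul_sum,
    rising_vand b c N]

/-- The terminating hypergeometric sum ₄F₃(−n, A, B, C; E, F, G; 1). -/
noncomputable def term4F3 (n : ℕ) (A B C E F G : ℝ) : ℝ :=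
  ∑ j ∈ Finset.range (n + 1),
    rising (-(n : ℝ)) j * rising A j * rising B j * rising C j /
      (rising E j * rising F j * rising G j * (j.factorial : ℝ))

theorem balanced_4F3_transformation (n : ℕ) (A B C E F G : ℝ)
    (hE : ∀ m : ℕ, E ≠ -(m : ℝ)) (hF : ∀ m : ℕ, F ≠ -(m : ℝ))
    (hG : ∀ m : ℕ, G ≠ -(m : ℝ))
    (hEF : ∀ m : ℕ, E + F - A - B ≠ -(m : ℝ))
    (hEG : ∀ m : ℕ, E + G - A - B ≠ -(m : ℝ))
    (hbal : -(n : ℝ) + A + B + C + 1 = E + F + G) :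
    term4F3 n A B C E F G =
      rising (F - C) n * rising (G - C) n / (rising F n * rising G n) *
        term4F3 n (E - A) (E - B) C E (E + F - A - B) (E + G - A - B) := by
  have shift : ∀ (x : ℝ), (∀ m : ℕ, x ≠ -(m:ℝ)) → ∀ k : ℕ, ∀ m : ℕ, x + (k:ℝ) ≠ -(m:ℝ) := by
    intro x hx k m
    have := hx (k+m)
    push_cast at this
    intro hc
    apply this
    linarith
  have hC : C = E + F + G + (n:ℝ) - 1 - A - B := by linarith
  have hsq : ∀ m : ℕ, ((-1:ℝ)^m * (-1:ℝ)^m) = 1 := fun m => by rw [← mul_pow]; norm_num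
  -- Identity 1 : expansion of (A)_j (B)_j
  have Id1 : ∀ j : ℕ, rising A j * rising B j
      = ∑ k ∈ range (j+1), (j.choose k : ℝ) * rising (E-A) k * rising (E-B) k
          * rising (E+k) (j-k) * rising (A+B-E) (j-k) := by
    intro j
    have hPS := saalschutz j (E-A) (E-B) E (1+E-A-B-(j:ℝ)) (by push_cast; ring)
    have et : ∀ k ∈ range (j+1), (j.choose k : ℝ) * rising (E-A) k * rising (E-B) k
          * rising (E+k) (j-k) * rising (A+B-E) (j-k)
        = (-1:ℝ)^j * ((-1:ℝ)^k * (j.choose k : ℝ) * rising (E-A) k * rising (E-B) k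
          * rising (E+k) (j-k) * rising ((1+E-A-B-(j:ℝ))+k) (j-k)) := by
      intro k hk
      have hkj : k ≤ j := by have := mem_range.1 hk; omega
      have hr : rising (A+B-E) (j-k) = (-1:ℝ)^(j-k) * rising ((1+E-A-B-(j:ℝ))+k) (j-k) := by
        rw [rising_reflect (A+B-E) (j-k)]
        congr 2
        push_cast [Nat.cast_sub hkj]
        ring
      rw [hr, neg_one_pow_sub hkj]
      ring
    rw [sum_congr rfl et, ← mul_sum, hPS]
    have h1 : rising (E-(E-A)) j = rising A j := by congr 1; ring
    have h2 : rising (E-(E-B)) j = rising B j := by congr 1; ring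
    rw [h1, h2]
    linear_combination (-(rising A j * rising B j)) * hsq j
  -- step 1 and 2 : expand and swap summation order
  have step12 : term4F3 n A B C E F G
      = ∑ k ∈ range (n+1), ∑ m ∈ range (n+1-k),
          rising (-(n:ℝ)) (k+m) * rising C (k+m)
            * (((k+m).choose k : ℝ) * rising (E-A) k * rising (E-B) k
              * rising (E+k) ((k+m)-k) * rising (A+B-E) ((k+m)-k))
          / (rising E (k+m) * rising F (k+m) * rising G (k+m) * ((k+m).factorial : ℝ)) := by
    rw [term4F3]
    rw [← tri_swap n (fun j k => rising (-(n:ℝ)) j * rising C j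
      * ((j.choose k : ℝ) * rising (E-A) k * rising (E-B) k
        * rising (E+k) (j-k) * rising (A+B-E) (j-k))
      / (rising E j * rising F j * rising G j * (j.factorial : ℝ)))]
    apply sum_congr rfl
    intro j hj
    rw [← sum_div, ← mul_sum, ← Id1 j]
    ring
  rw [step12]
  -- step 3/4 : evaluate the inner sum for each k
  have inner : ∀ k ∈ range (n+1), ∑ m ∈ range (n+1-k),
      rising (-(n:ℝ)) (k+m) * rising C (k+m)
        * (((k+m).choose k : ℝ) * rising (E-A) k * rising (E-B) k
          * rising (E+k) ((k+m)-k) * rising (A+B-E) ((k+m)-k))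
      / (rising E (k+m) * rising F (k+m) * rising G (k+m) * ((k+m).factorial : ℝ))
      = (rising (-(n:ℝ)) k * rising C k * rising (E-A) k * rising (E-B) k
          / (rising E k * rising F k * rising G k * (k.factorial : ℝ)
              * (rising (F+(k:ℝ)) (n-k) * rising (G+(k:ℝ)) (n-k))))
        * ((-1:ℝ)^(n-k) * rising ((F+(k:ℝ))-(C+(k:ℝ))) (n-k)
            * rising ((F+(k:ℝ))-(A+B-E)) (n-k)) := by
    intro k hk
    have hkn : k ≤ n := by have := mem_range.1 hk; omega
    have pt : ∀ m ∈ range (n+1-k),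
        rising (-(n:ℝ)) (k+m) * rising C (k+m)
          * (((k+m).choose k : ℝ) * rising (E-A) k * rising (E-B) k
            * rising (E+k) ((k+m)-k) * rising (A+B-E) ((k+m)-k))
        / (rising E (k+m) * rising F (k+m) * rising G (k+m) * ((k+m).factorial : ℝ))
        = (rising (-(n:ℝ)) k * rising C k * rising (E-A) k * rising (E-B) k
            / (rising E k * rising F k * rising G k * (k.factorial : ℝ)
                * (rising (F+(k:ℝ)) (n-k) * rising (G+(k:ℝ)) (n-k))))
          * ((-1:ℝ)^m * (((n-k).choose m) : ℝ) * rising (C+(k:ℝ)) m * rising (A+B-E) m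
            * rising ((F+(k:ℝ))+(m:ℝ)) ((n-k)-m) * rising ((G+(k:ℝ))+(m:ℝ)) ((n-k)-m)) := by
      intro m hm
      have hmn : m ≤ n - k := by have := mem_range.1 hm; omega
      have e0 : (k+m)-k = m := by omega
      have eNeg : rising (-(n:ℝ)) (k+m) = rising (-(n:ℝ)) k
          * ((-1:ℝ)^m * (((n-k).choose m) : ℝ) * (m.factorial : ℝ)) := by
        rw [rising_add]
        congr 1
        have harg : -(n:ℝ) + (k:ℝ) = -(((n-k:ℕ)):ℝ) := by
          push_cast [Nat.cast_sub hkn]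
          ring
        rw [harg, rising_neg_nat hmn]
      have eC : rising C (k+m) = rising C k * rising (C+(k:ℝ)) m := rising_add C k m
      have eE : rising E (k+m) = rising E k * rising (E+(k:ℝ)) m := rising_add E k m
      have eF : rising F (k+m) = rising F k * rising (F+(k:ℝ)) m := rising_add F k m
      have eG : rising G (k+m) = rising G k * rising (G+(k:ℝ)) m := rising_add G k m
      have eFs : rising (F+(k:ℝ)) (n-k)
          = rising (F+(k:ℝ)) m * rising ((F+(k:ℝ))+(m:ℝ)) ((n-k)-m) := by
        have := rising_add (F+(k:ℝ)) m ((n-k)-m)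
        rw [(by omega : m + ((n-k)-m) = n-k)] at this
        exact this
      have eGs : rising (G+(k:ℝ)) (n-k)
          = rising (G+(k:ℝ)) m * rising ((G+(k:ℝ))+(m:ℝ)) ((n-k)-m) := by
        have := rising_add (G+(k:ℝ)) m ((n-k)-m)
        rw [(by omega : m + ((n-k)-m) = n-k)] at this
        exact this
      have efact : (((k+m).factorial : ℕ) : ℝ)
          = ((k+m).choose k : ℝ) * (k.factorial : ℝ) * (m.factorial : ℝ) := by
        have := Nat.choose_mul_factorial_mul_factorial (by omega : k ≤ k + m)
        rw [(by omega : k+m-k = m)] at this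
        exact_mod_cast this.symm
      have hch : ((k+m).choose k : ℝ) ≠ 0 :=
        Nat.cast_ne_zero.2 (Nat.choose_pos (by omega : k ≤ k + m)).ne'
      rw [e0, eNeg, eC, eE, eF, eG, efact, eFs, eGs]
      have hE0 : rising E k ≠ 0 := rising_ne_zero hE k
      have hF0 : rising F k ≠ 0 := rising_ne_zero hF k
      have hG0 : rising G k ≠ 0 := rising_ne_zero hG k
      have hEk0 : rising (E+(k:ℝ)) m ≠ 0 := rising_ne_zero (shift E hE k) m
      have hFk0 : rising (F+(k:ℝ)) m ≠ 0 := rising_ne_zero (shift F hF k) m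
      have hGk0 : rising (G+(k:ℝ)) m ≠ 0 := rising_ne_zero (shift G hG k) m
      have hFkm0 : rising ((F+(k:ℝ))+(m:ℝ)) ((n-k)-m) ≠ 0 :=
        rising_ne_zero (shift (F+(k:ℝ)) (shift F hF k) m) ((n-k)-m)
      have hGkm0 : rising ((G+(k:ℝ))+(m:ℝ)) ((n-k)-m) ≠ 0 :=
        rising_ne_zero (shift (G+(k:ℝ)) (shift G hG k) m) ((n-k)-m)
      have hkf : (k.factorial : ℝ) ≠ 0 := Nat.cast_ne_zero.2 k.factorial_ne_zero
      have hmf : (m.factorial : ℝ) ≠ 0 := Nat.cast_ne_zero.2 m.factorial_ne_zero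
      field_simp
    have hcon : (F+(k:ℝ)) + (G+(k:ℝ)) = 1 + (C+(k:ℝ)) + (A+B-E) - ((n-k:ℕ):ℝ) := by
      push_cast [Nat.cast_sub hkn]
      linarith
    rw [(by omega : n+1-k = (n-k)+1)] at pt ⊢
    rw [sum_congr rfl pt, ← mul_sum,
      saalschutz (n-k) (C+(k:ℝ)) (A+B-E) (F+(k:ℝ)) (G+(k:ℝ)) hcon]
  rw [sum_congr rfl inner]
  have step5 : ∀ k ∈ range (n+1),
      (rising (-(n:ℝ)) k * rising C k * rising (E-A) k * rising (E-B) k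
          / (rising E k * rising F k * rising G k * (k.factorial : ℝ)
              * (rising (F+(k:ℝ)) (n-k) * rising (G+(k:ℝ)) (n-k))))
        * ((-1:ℝ)^(n-k) * rising ((F+(k:ℝ))-(C+(k:ℝ))) (n-k)
            * rising ((F+(k:ℝ))-(A+B-E)) (n-k))
      = (rising (F - C) n * rising (G - C) n / (rising F n * rising G n))
        * (rising (-(n:ℝ)) k * rising (E-A) k * rising (E-B) k * rising C k
            / (rising E k * rising (E+F-A-B) k * rising (E+G-A-B) k * (k.factorial : ℝ))) := by
    intro k hk
    have hkn : k ≤ n := by have := mem_range.1 hk; omega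
    have harg1 : rising ((F+(k:ℝ))-(C+(k:ℝ))) (n-k) = rising (F-C) (n-k) := by
      congr 1
      ring
    have harg2 : rising ((F+(k:ℝ))-(A+B-E)) (n-k) = rising ((E+F-A-B)+(k:ℝ)) (n-k) := by
      congr 1
      ring
    have t1 : rising ((E+G-A-B)+(k:ℝ)) (n-k) = (-1:ℝ)^(n-k) * rising (F-C) (n-k) := by
      rw [rising_reflect ((E+G-A-B)+(k:ℝ)) (n-k)]
      congr 2
      push_cast [Nat.cast_sub hkn]
      linarith
    have t2 : rising (E+G-A-B) n = (-1:ℝ)^n * rising (F-C) n := by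
      rw [rising_reflect (E+G-A-B) n]
      congr 2
      push_cast
      linarith
    have t2' : rising (E+F-A-B) n = (-1:ℝ)^n * rising (G-C) n := by
      rw [rising_reflect (E+F-A-B) n]
      congr 2
      push_cast
      linarith
    have hprod : rising (F-C) n * rising (G-C) n
        = rising (E+F-A-B) n * rising (E+G-A-B) n := by
      rw [t2, t2']
      linear_combination (-(rising (F-C) n * rising (G-C) n)) * hsq n
    have hFsplit : rising F n = rising F k * rising (F+(k:ℝ)) (n-k) := by
      have := rising_add F k (n-k)
      rw [(by omega : k+(n-k) = n)] at this
      exact this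
    have hGsplit : rising G n = rising G k * rising (G+(k:ℝ)) (n-k) := by
      have := rising_add G k (n-k)
      rw [(by omega : k+(n-k) = n)] at this
      exact this
    have hUsplit : rising (E+F-A-B) n
        = rising (E+F-A-B) k * rising ((E+F-A-B)+(k:ℝ)) (n-k) := by
      have := rising_add (E+F-A-B) k (n-k)
      rw [(by omega : k+(n-k) = n)] at this
      exact this
    have hVsplit : rising (E+G-A-B) n
        = rising (E+G-A-B) k * rising ((E+G-A-B)+(k:ℝ)) (n-k) := by
      have := rising_add (E+G-A-B) k (n-k)
      rw [(by omega : k+(n-k) = n)] at this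
      exact this
    rw [harg1, harg2, ← t1, hprod, hFsplit, hGsplit, hUsplit, hVsplit]
    have hE0 : rising E k ≠ 0 := rising_ne_zero hE k
    have hF0 : rising F k ≠ 0 := rising_ne_zero hF k
    have hG0 : rising G k ≠ 0 := rising_ne_zero hG k
    have hU0 : rising (E+F-A-B) k ≠ 0 := rising_ne_zero hEF k
    have hV0 : rising (E+G-A-B) k ≠ 0 := rising_ne_zero hEG k
    have hFk0 : rising (F+(k:ℝ)) (n-k) ≠ 0 := rising_ne_zero (shift F hF k) (n-k)
    have hGk0 : rising (G+(k:ℝ)) (n-k) ≠ 0 := rising_ne_zero (shift G hG k) (n-k)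
    have hkf : (k.factorial : ℝ) ≠ 0 := Nat.cast_ne_zero.2 k.factorial_ne_zero
    field_simp
  rw [sum_congr rfl step5, ← mul_sum, term4F3]
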